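/- Let H be a complex Hilbert space and let A and B be closed, densely defined unbounded operators on H (LinearPMaps from H to H with dense domain and closed graph), with adjoints A† and B†. Suppose that dom(B†) ⊆ dom(A†) and that ‖A† x‖ ≤ ‖B† x‖ for all x ∈ dom(B†). Then there exists a bounded operator D on H with ‖D‖ ≤ 1 such that D (B† x) = A† x for every x ∈ dom(B†). -/

import Mathlib

open LinearPMap

theorem unbounded_douglas_factorization
    {H : Type*} [NormedAddCommGroup H] [InnerProductSpace ℂ H] [CompleteSpace H]
    (A B : H →ₗ.[ℂ] H)
    (hA_dense : Dense (A.domain : Set H))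
    (hB_dense : Dense (B.domain : Set H))
    (hA_closed : A.IsClosed)
    (hB_closed : B.IsClosed)
    (hdom : B.adjoint.domain ≤ A.adjoint.domain)
    (hle : ∀ x : B.adjoint.domain,
      ‖A.adjoint ⟨(x : H), hdom x.2⟩‖ ≤ ‖B.adjoint x‖) :
    ∃ D : H →L[ℂ] H, ‖D‖ ≤ 1 ∧
      ∀ x : B.adjoint.domain, D (B.adjoint x) = A.adjoint ⟨(x : H), hdom x.2⟩ := by
  classical
  -- B' and A' as plain linear maps on dom B†
  set B' : B.adjoint.domain →ₗ[ℂ] H := B.adjoint.toFun with hB'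
  set A' : B.adjoint.domain →ₗ[ℂ] H :=
    A.adjoint.toFun.comp (Submodule.inclusion hdom) with hA'
  have hle' : ∀ x : B.adjoint.domain, ‖A' x‖ ≤ ‖B' x‖ := fun x => hle x
  have hker : LinearMap.ker B' ≤ LinearMap.ker A' := by
    intro x hx
    have : ‖A' x‖ ≤ ‖B' x‖ := hle' x
    rw [LinearMap.mem_ker] at hx ⊢
    rw [hx, norm_zero] at this
    exact norm_le_zero_iff.mp this
  -- the map g : range B' → H, g (B' x) = A' x
  set S := LinearMap.range B' with hS
  set g : S →ₗ[ℂ] H :=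
    ((LinearMap.ker B').liftQ A' hker).comp
      (LinearMap.quotKerEquivRange B').symm.toLinearMap with hg
  have hg_apply : ∀ x : B.adjoint.domain, ∀ h, g ⟨B' x, h⟩ = A' x := by
    intro x h
    have h1 : (LinearMap.quotKerEquivRange B') (Submodule.Quotient.mk x) = ⟨B' x, h⟩ :=
      Subtype.ext (LinearMap.quotKerEquivRange_apply_mk B' x)
    have h2 : (LinearMap.quotKerEquivRange B').symm ⟨B' x, h⟩ = Submodule.Quotient.mk x := by
      rw [← h1, LinearEquiv.symm_apply_apply]
    simp [hg, h2]
  have hg_norm : ∀ s : S, ‖g s‖ ≤ 1 * ‖s‖ := by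
    rintro ⟨s, hs⟩
    obtain ⟨x, rfl⟩ := hs
    rw [hg_apply x ⟨x, rfl⟩, one_mul]
    exact hle' x
  set gc : S →L[ℂ] H := g.mkContinuous 1 hg_norm with hgc
  have hgc_norm : ‖gc‖ ≤ 1 := g.mkContinuous_norm_le zero_le_one hg_norm
  -- the closure of S and the inclusion
  set K := S.topologicalClosure with hK
  set ei : S →ₗᵢ[ℂ] K :=
    ⟨Submodule.inclusion S.le_topologicalClosure, fun x => rfl⟩ with hei
  set e : S →L[ℂ] K := ei.toContinuousLinearMap with he
  have he_norm : ∀ x : S, ‖(x : S)‖ ≤ (1 : NNReal) * ‖e x‖ := by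
    intro x
    rw [NNReal.coe_one, one_mul]
    exact le_of_eq (ei.norm_map x).symm
  have h_dense : DenseRange e := by
    intro y
    rw [mem_closure_iff_seq_limit] at *
    have hy : (y : H) ∈ closure (S : Set H) := y.2
    rw [mem_closure_iff_seq_limit] at hy
    obtain ⟨u, hu, hulim⟩ := hy
    refine ⟨fun n => e ⟨u n, hu n⟩, fun n => ⟨⟨u n, hu n⟩, rfl⟩, ?_⟩
    exact tendsto_subtype_rng.mpr hulim
  have h_unif : IsUniformInducing e := ei.isometry.isUniformInducing
  -- extend gc to K
  set gext : K →L[ℂ] H := gc.extend e with hgext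
  have hgext_norm : ‖gext‖ ≤ 1 := by
    have h0 : IsUniformInducing e :=
      (ContinuousLinearMap.isUniformEmbedding_of_bound e he_norm).isUniformInducing
    have := ContinuousLinearMap.opNorm_extend_le gc h_dense he_norm
    calc ‖gext‖ = ‖gc.extend e‖ := rfl
      _ ≤ (1 : NNReal) * ‖gc‖ := this
      _ ≤ 1 := by rw [NNReal.coe_one, one_mul]; exact hgc_norm
  -- orthogonal projection onto K; K is complete since it's closed
  have : CompleteSpace K := S.isClosed_topologicalClosure.completeSpace_coe
  set P : H →L[ℂ] K := (K.orthogonalProjectionOnto : H →L[ℂ] K) with hP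
  refine ⟨gext.comp P, ?_, ?_⟩
  · calc ‖gext.comp P‖
        ≤ ‖gext‖ * ‖P‖ := ContinuousLinearMap.opNorm_comp_le _ _
      _ ≤ 1 * 1 :=
          mul_le_mul hgext_norm (Submodule.orthogonalProjectionOnto_norm_le K) (norm_nonneg P) zero_le_one
      _ = 1 := one_mul 1
  · intro x
    have hmemS : B.adjoint x ∈ S := ⟨x, rfl⟩
    have hmemK : B.adjoint x ∈ K := S.le_topologicalClosure hmemS
    have hproj : P (B.adjoint x) = ⟨B.adjoint x, hmemK⟩ :=
      Subtype.ext (K.starProjection_eq_self_iff.mpr hmemK)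
    have hE : (⟨B.adjoint x, hmemK⟩ : K) = e ⟨B.adjoint x, hmemS⟩ := rfl
    calc (gext.comp P) (B.adjoint x)
        = gext (P (B.adjoint x)) := rfl
      _ = gext (e ⟨B.adjoint x, hmemS⟩) := by rw [hproj, hE]
      _ = gc ⟨B.adjoint x, hmemS⟩ := ContinuousLinearMap.extend_eq _ h_dense h_unif _
      _ = A.adjoint ⟨(x : H), hdom x.2⟩ := hg_apply x hmemS
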